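/- For every real number w ≥ 0, the arctangent integral satisfies ∫₀ʷ (arctan u)/u du = (π/2) · ∫₀¹∫₀¹ log |1 + w² + (e^{2πis} + w)² · e^{2πit}| ds dt − (π/4) · log(1 + w²). -/

import Mathlib

open Real MeasureTheory intervalIntegral

noncomputable def E (t : ℝ) : ℂ := Complex.exp (2 * Real.pi * Complex.I * t)

lemma abs_E (t : ℝ) : (norm : ℂ → ℝ) (E t) = 1 := by
  simp [E, Complex.norm_exp]

lemma integral_E_pow (n : ℕ) (hn : 1 ≤ n) : (∫ t in (0:ℝ)..1, (E t) ^ n) = 0 := by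
  have hc : (2 * Real.pi * Complex.I * n) ≠ 0 := by
    have : (n:ℂ) ≠ 0 := Nat.cast_ne_zero.2 (by omega)
    simp [Real.pi_ne_zero, Complex.I_ne_zero, this]
  have : ∀ t : ℝ, (E t) ^ n = Complex.exp ((2 * Real.pi * Complex.I * n) * t) := by
    intro t
    rw [E, ← Complex.exp_nat_mul]
    ring_nf
  simp_rw [this]
  rw [integral_exp_mul_complex hc]
  have h1 : Complex.exp (2 * Real.pi * Complex.I * n * (1:ℝ)) = 1 := by
    push_cast
    rw [mul_one]
    have := Complex.exp_int_mul_two_pi_mul_I n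
    convert this using 2
    push_cast; ring
  have h0 : Complex.exp (2 * Real.pi * Complex.I * n * (0:ℝ)) = 1 := by
    norm_num
  rw [h1, h0]
  simp

lemma continuous_E : Continuous E := by
  unfold E; fun_prop

lemma re_pos_one_add {z : ℂ} (hz : (norm : ℂ → ℝ) z < 1) : 0 < (1 + z).re := by
  have h := Complex.abs_re_le_norm z
  have : -(1:ℝ) < z.re := by
    have := neg_abs_le z.re
    nlinarith [abs_nonneg z.re]
  simp only [Complex.add_re, Complex.one_re]
  linarith

lemma one_add_ne_zero {z : ℂ} (hz : (norm : ℂ → ℝ) z < 1) : 1 + z ≠ 0 := by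
  intro h
  have := re_pos_one_add hz
  rw [h] at this; simp at this

lemma jensen_interior {c : ℂ} (hc : (norm : ℂ → ℝ) c < 1) :
    (∫ t in (0:ℝ)..1, Real.log ((norm : ℂ → ℝ) (1 + c * E t))) = 0 := by
  have habs : ∀ t : ℝ, (norm : ℂ → ℝ) (c * E t) < 1 := by
    intro t; rw [norm_mul, abs_E, mul_one]; exact hc
  have hcont1 : Continuous fun t : ℝ => 1 + c * E t := by
    exact continuous_const.add (continuous_const.mul continuous_E)
  have hne : ∀ t : ℝ, 1 + c * E t ≠ 0 := fun t => one_add_ne_zero (habs t)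
  have hgcont : Continuous fun t : ℝ => Complex.log (1 + c * E t) := by
    refine continuous_iff_continuousAt.2 fun t => ?_
    refine (continuousAt_clog ?_).comp hcont1.continuousAt
    exact Complex.mem_slitPlane_iff.2 (Or.inl (re_pos_one_add (habs t)))
  have hint : IntegrableOn (fun t : ℝ => Complex.log (1 + c * E t))
      (Set.Ioc (0:ℝ) 1) volume :=
    hgcont.integrableOn_Ioc
  rw [intervalIntegral.integral_of_le zero_le_one]
  have hlogre : ∀ t : ℝ, Real.log ((norm : ℂ → ℝ) (1 + c * E t))
      = (Complex.log (1 + c * E t)).re := fun t => (Complex.log_re _).symm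
  simp_rw [hlogre, ← RCLike.re_eq_complex_re]
  rw [integral_re hint]
  have hkey : (∫ t in Set.Ioc (0:ℝ) 1, Complex.log (1 + c * E t)) = 0 := by
    set F : ℕ → ℝ → ℂ := fun n t => (-1) ^ (n + 1) * (c * E t) ^ n / n with hF
    have heq : ∀ t : ℝ, Complex.log (1 + c * E t) = ∑' n, F n t := by
      intro t
      exact (Complex.hasSum_taylorSeries_log
        (by simpa using habs t)).tsum_eq.symm
    simp_rw [heq]
    have hF_int : ∀ n, Integrable (F n) (volume.restrict (Set.Ioc (0:ℝ) 1)) := by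
      intro n
      refine Continuous.integrableOn_Ioc ?_
      exact (continuous_const.mul (((continuous_const.mul continuous_E)).pow n)).div_const _
    have hFnorm : ∀ n (t : ℝ), ‖F n t‖ = (norm : ℂ → ℝ) c ^ n / n := by
      intro n t
      simp only [hF, norm_div, norm_mul, norm_pow, norm_neg, norm_one, one_pow, one_mul]
      rw [abs_E, mul_one, Complex.norm_natCast]
    have hF_sum : Summable fun n => ∫ t in Set.Ioc (0:ℝ) 1, ‖F n t‖ := by
      have : ∀ n, (∫ t in Set.Ioc (0:ℝ) 1, ‖F n t‖) = (norm : ℂ → ℝ) c ^ n / n := by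
        intro n
        simp_rw [hFnorm n]
        rw [setIntegral_const]
        simp [Real.volume_Ioc]
      rw [funext this]
      refine Summable.of_nonneg_of_le (fun n => by positivity) (fun n => ?_)
        (summable_geometric_of_lt_one (norm_nonneg c) hc)
      rcases Nat.eq_zero_or_pos n with h | h
      · simp [h]
      · rw [div_le_iff₀ (by exact_mod_cast h)]
        nlinarith [pow_nonneg (norm_nonneg c) n, (by exact_mod_cast h : (1:ℝ) ≤ n)]
    rw [← integral_tsum_of_summable_integral_norm hF_int hF_sum]
    have hterm : ∀ n, (∫ t in Set.Ioc (0:ℝ) 1, F n t) = 0 := by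
      intro n
      rcases Nat.eq_zero_or_pos n with h | h
      · simp [hF, h]
      · have : ∀ t : ℝ, F n t = ((-1) ^ (n + 1) * c ^ n / n) * (E t) ^ n := by
          intro t; simp only [hF, mul_pow]; ring
        simp_rw [this]
        rw [MeasureTheory.integral_const_mul]
        rw [← intervalIntegral.integral_of_le zero_le_one, integral_E_pow n h, mul_zero]
    simp [hterm]
  rw [hkey, map_zero]

lemma le_of_sq_le_sq' {a b : ℝ} (hb : 0 ≤ b) (h : a ^ 2 ≤ b ^ 2) (ha : 0 ≤ a) : a ≤ b := by
  nlinarith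

lemma key_lower {z : ℂ} (hz : (norm : ℂ → ℝ) z = 1) {ρ : ℝ} (h1 : 1/2 ≤ ρ) (h2 : ρ ≤ 1) :
    (norm : ℂ → ℝ) (1 + z) / 2 ≤ (norm : ℂ → ℝ) (1 + (ρ:ℂ) * z) := by
  have hn : z.re ^ 2 + z.im ^ 2 = 1 := by
    have := Complex.sq_norm z
    rw [hz] at this
    simp [Complex.normSq_apply] at this
    nlinarith [this]
  have e1 : (norm : ℂ → ℝ) (1 + (ρ:ℂ) * z) ^ 2 = 1 + 2*ρ*z.re + ρ^2 := by
    rw [Complex.sq_norm, Complex.normSq_apply]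
    simp [Complex.add_re, Complex.add_im, Complex.mul_re, Complex.mul_im]
    nlinarith [hn]
  have e2 : (norm : ℂ → ℝ) (1 + z) ^ 2 = 2 + 2*z.re := by
    rw [Complex.sq_norm, Complex.normSq_apply]
    simp [Complex.add_re, Complex.add_im]
    nlinarith [hn]
  have hre : z.re ≤ 1 ∧ -1 ≤ z.re := by constructor <;> nlinarith [sq_nonneg z.im]
  refine le_of_sq_le_sq' (norm_nonneg _) ?_ (by positivity)
  rw [div_pow, e1, e2]
  rcases le_or_gt z.re (1/2) with h | h
  · nlinarith [sq_nonneg (ρ + z.re), hre.1, hre.2]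
  · nlinarith [hre.1]

lemma key_upper {z : ℂ} (hz : (norm : ℂ → ℝ) z = 1) {ρ : ℝ} (h0 : 0 ≤ ρ) (h2 : ρ ≤ 1) :
    (norm : ℂ → ℝ) (1 + (ρ:ℂ) * z) ≤ 2 := by
  calc (norm : ℂ → ℝ) (1 + (ρ:ℂ) * z) ≤ (norm : ℂ → ℝ) 1 + (norm : ℂ → ℝ) ((ρ:ℂ) * z) :=
        norm_add_le _ _
    _ ≤ 2 := by
        rw [norm_mul, hz, norm_one, mul_one, Complex.norm_real, Real.norm_eq_abs, abs_of_nonneg h0]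
        linarith

lemma f_le_log_two {z : ℂ} (hz : (norm : ℂ → ℝ) z ≤ 2) : Real.log ((norm : ℂ → ℝ) z) ≤ Real.log 2 := by
  rcases eq_or_lt_of_le (norm_nonneg z) with h | h
  · rw [← h, Real.log_zero]; positivity
  · exact Real.log_le_log h hz

lemma jensen_boundary {c : ℂ} (hc : (norm : ℂ → ℝ) c = 1) :
    IntegrableOn (fun t => Real.log ((norm : ℂ → ℝ) (1 + c * E t))) (Set.Ioc (0:ℝ) 1) volume ∧
    (∫ t in Set.Ioc (0:ℝ) 1, Real.log ((norm : ℂ → ℝ) (1 + c * E t))) = 0 := by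
  set μ := volume.restrict (Set.Ioc (0:ℝ) 1) with hμ
  set f : ℝ → ℝ := fun t => Real.log ((norm : ℂ → ℝ) (1 + c * E t)) with hfdef
  set r : ℕ → ℝ := fun n => 1 - 1/(n+2) with hrdef
  have hr0 : ∀ n, 1/2 ≤ r n := by
    intro n
    have hn : (0:ℝ) ≤ (n:ℝ) := Nat.cast_nonneg n
    have h2 : (2:ℝ) ≤ (n:ℝ) + 2 := by linarith
    have : 1/((n:ℝ)+2) ≤ 1/2 := by
      apply one_div_le_one_div_of_le <;> linarith
    simp only [hrdef]; linarith
  have hr0' : ∀ n, 0 ≤ r n := fun n => le_trans (by norm_num) (hr0 n)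
  have hr1 : ∀ n, r n < 1 := by
    intro n
    have hn : (0:ℝ) ≤ (n:ℝ) := Nat.cast_nonneg n
    have : 0 < 1/((n:ℝ)+2) := by positivity
    simp only [hrdef]; linarith
  have hrt : Filter.Tendsto r Filter.atTop (nhds 1) := by
    have h1 : Filter.Tendsto (fun n : ℕ => ((n:ℝ) + 2)) Filter.atTop Filter.atTop :=
      Filter.tendsto_atTop_add_const_right _ 2 tendsto_natCast_atTop_atTop
    have h2 : Filter.Tendsto (fun n : ℕ => ((n:ℝ)+2)⁻¹) Filter.atTop (nhds 0) :=
      h1.inv_tendsto_atTop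
    have h3 := Filter.Tendsto.const_sub 1 h2
    rw [sub_zero] at h3
    simpa [hrdef, one_div] using h3
  set fn : ℕ → ℝ → ℝ := fun n t => Real.log ((norm : ℂ → ℝ) (1 + ((r n : ℝ):ℂ) * c * E t))
    with hfndef
  have habsz : ∀ t : ℝ, (norm : ℂ → ℝ) (c * E t) = 1 := by
    intro t; rw [norm_mul, abs_E, hc, mul_one]
  have habsn : ∀ n t, (norm : ℂ → ℝ) (((r n : ℝ):ℂ) * c * E t) < 1 := by
    intro n t
    rw [mul_assoc, norm_mul, habsz, mul_one, Complex.norm_real, Real.norm_eq_abs]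
    rw [abs_of_nonneg (hr0' n)]
    exact hr1 n
  have hnen : ∀ n t, (1 + ((r n : ℝ):ℂ) * c * E t) ≠ 0 := fun n t => one_add_ne_zero (habsn n t)
  have habspos : ∀ n t, 0 < (norm : ℂ → ℝ) (1 + ((r n : ℝ):ℂ) * c * E t) := by
    intro n t
    rw [norm_pos_iff]
    exact hnen n t
  have hfncont : ∀ n, Continuous (fn n) := by
    intro n
    have h1 : Continuous fun t : ℝ => (norm : ℂ → ℝ) (1 + ((r n : ℝ):ℂ) * c * E t) :=
      continuous_norm.comp
        (continuous_const.add (continuous_const.mul continuous_E))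
    exact h1.log fun t => ne_of_gt (habspos n t)
  have hfnint : ∀ n, Integrable (fn n) μ := fun n => (hfncont n).integrableOn_Ioc
  have hfnzero : ∀ n, (∫ t, fn n t ∂μ) = 0 := by
    intro n
    have := jensen_interior (c := ((r n : ℝ):ℂ) * c)
      (by rw [norm_mul, hc, mul_one, Complex.norm_real, Real.norm_eq_abs, abs_of_nonneg (hr0' n)];
          exact hr1 n)
    rw [intervalIntegral.integral_of_le zero_le_one] at this
    exact this
  -- bad set
  set N : Set ℝ := {t | 1 + c * E t = 0} with hNdef
  have hcne : c ≠ 0 := by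
    intro h; rw [h] at hc; simp at hc
  have hNsub : (N ∩ Set.Ioc (0:ℝ) 1).Subsingleton := by
    rintro t1 ⟨ht1, ht1'⟩ t2 ⟨ht2, ht2'⟩
    have hE : E t1 = E t2 := by
      have e1 : c * E t1 = -1 := by
        have : 1 + c * E t1 = 0 := ht1
        linear_combination this
      have e2 : c * E t2 = -1 := by
        have : 1 + c * E t2 = 0 := ht2
        linear_combination this
      have := e1.trans e2.symm
      exact mul_left_cancel₀ hcne this
    rw [E, E, Complex.exp_eq_exp_iff_exists_int] at hE
    obtain ⟨k, hk⟩ := hE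
    have hI : (2 * Real.pi * Complex.I) ≠ 0 := by
      simp [Real.pi_ne_zero, Complex.I_ne_zero]
    have : (t1 : ℂ) = (t2 : ℂ) + k := by
      have h' : 2 * Real.pi * Complex.I * t1 = 2 * Real.pi * Complex.I * (t2 + k) := by
        rw [hk]; ring
      exact mul_left_cancel₀ hI h'
    have hre : t1 = t2 + k := by
      have := congrArg Complex.re this
      simpa using this
    have hk0 : k = 0 := by
      rcases ht1' with ⟨h01, h02⟩
      rcases ht2' with ⟨h03, h04⟩
      have h5 : -1 < (k:ℝ) := by nlinarith
      have h6 : (k:ℝ) < 1 := by nlinarith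
      have h5' : (-1:ℤ) < k := by exact_mod_cast h5
      have h6' : k < 1 := by exact_mod_cast h6
      omega
    rw [hre, hk0]
    simp
  have hNzero : μ N = 0 := by
    rw [hμ, Measure.restrict_apply' measurableSet_Ioc]
    exact hNsub.measure_zero _
  have haeN : ∀ᵐ t ∂μ, t ∉ N := by
    rw [MeasureTheory.ae_iff]
    simpa using hNzero
  -- pointwise limit
  have hlim : ∀ᵐ t ∂μ, Filter.Tendsto (fun n => fn n t) Filter.atTop (nhds (f t)) := by
    filter_upwards [haeN] with t ht
    have habsne : (norm : ℂ → ℝ) (1 + c * E t) ≠ 0 := by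
      rw [norm_ne_zero_iff]
      exact fun h => ht h
    have hca : ContinuousAt (fun ρ : ℝ => Real.log ((norm : ℂ → ℝ) (1 + (ρ:ℂ) * c * E t))) 1 := by
      have h1 : Continuous fun ρ : ℝ => (norm : ℂ → ℝ) (1 + (ρ:ℂ) * c * E t) :=
        continuous_norm.comp
          (continuous_const.add ((Complex.continuous_ofReal.mul continuous_const).mul
            continuous_const))
      refine ContinuousAt.log h1.continuousAt ?_
      simpa using habsne
    have := hca.tendsto.comp hrt
    simpa [hfndef, hfdef, Function.comp_def] using this
  -- f is measurable
  have hfm : AEStronglyMeasurable f μ :=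
    aestronglyMeasurable_of_tendsto_ae Filter.atTop
      (fun n => (hfncont n).aestronglyMeasurable) hlim
  -- f ≤ log 2 everywhere
  have habs2 : ∀ t, (norm : ℂ → ℝ) (1 + c * E t) ≤ 2 := by
    intro t
    calc (norm : ℂ → ℝ) (1 + c * E t) ≤ (norm : ℂ → ℝ) 1 + (norm : ℂ → ℝ) (c * E t) :=
          norm_add_le _ _
      _ = 2 := by rw [habsz t, norm_one]; norm_num
  have hfle : ∀ t, f t ≤ Real.log 2 := fun t => f_le_log_two (habs2 t)
  -- Fatou: integrability of f
  have hφint : Integrable (fun t => Real.log 2 - f t) μ := by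
    have hφm : AEStronglyMeasurable (fun t => Real.log 2 - f t) μ :=
      (aestronglyMeasurable_const).sub hfm
    have hφnn : ∀ t, 0 ≤ Real.log 2 - f t := fun t => by linarith [hfle t]
    have hfnle : ∀ n t, fn n t ≤ Real.log 2 := by
      intro n t
      refine f_le_log_two ?_
      rw [mul_assoc]
      exact key_upper (habsz t) (hr0' n) (le_of_lt (hr1 n))
    have hμfin : μ Set.univ < ⊤ := by
      rw [hμ, Measure.restrict_apply_univ]
      simp [Real.volume_Ioc]
    have hconst_int : Integrable (fun _ : ℝ => Real.log 2) μ := integrable_const _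
    have hφnint : ∀ n, (∫ t, (Real.log 2 - fn n t) ∂μ) = Real.log 2 := by
      intro n
      rw [integral_sub hconst_int (hfnint n), hfnzero n, sub_zero,
        MeasureTheory.integral_const]
      simp [hμ, Measure.real, Real.volume_Ioc]
    have hlin : ∀ n, (∫⁻ t, ENNReal.ofReal (Real.log 2 - fn n t) ∂μ)
        = ENNReal.ofReal (Real.log 2) := by
      intro n
      have hsub : Integrable (fun t => Real.log 2 - fn n t) μ := hconst_int.sub (hfnint n)
      rw [← MeasureTheory.ofReal_integral_eq_lintegral_ofReal
        hsub (Filter.Eventually.of_forall fun t => by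
          simp only [Pi.zero_apply]; linarith [hfnle n t])]
      rw [hφnint n]
    have hfatou : (∫⁻ t, ENNReal.ofReal (Real.log 2 - f t) ∂μ) ≤ ENNReal.ofReal (Real.log 2) := by
      have hliminf : (∫⁻ t, ENNReal.ofReal (Real.log 2 - f t) ∂μ)
          = ∫⁻ t, Filter.liminf (fun n => ENNReal.ofReal (Real.log 2 - fn n t)) Filter.atTop ∂μ := by
        refine lintegral_congr_ae ?_
        filter_upwards [hlim] with t ht
        have : Filter.Tendsto (fun n => ENNReal.ofReal (Real.log 2 - fn n t)) Filter.atTop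
            (nhds (ENNReal.ofReal (Real.log 2 - f t))) := by
          exact (ENNReal.continuous_ofReal.continuousAt).tendsto.comp
            ((tendsto_const_nhds.sub ht))
        exact this.liminf_eq.symm
      rw [hliminf]
      calc _ ≤ Filter.liminf (fun n => ∫⁻ t, ENNReal.ofReal (Real.log 2 - fn n t) ∂μ)
            Filter.atTop := by
            apply lintegral_liminf_le
            intro n
            exact ((hfncont n).measurable.const_sub _).ennreal_ofReal
        _ = ENNReal.ofReal (Real.log 2) := by
            simp_rw [hlin]
            exact Filter.liminf_const _
    refine ⟨hφm, ?_⟩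
    rw [MeasureTheory.hasFiniteIntegral_iff_norm]
    have : (∫⁻ t, ENNReal.ofReal ‖Real.log 2 - f t‖ ∂μ)
        = ∫⁻ t, ENNReal.ofReal (Real.log 2 - f t) ∂μ := by
      refine lintegral_congr fun t => ?_
      rw [Real.norm_of_nonneg (hφnn t)]
    rw [this]
    exact lt_of_le_of_lt hfatou ENNReal.ofReal_lt_top
  have hfint : Integrable f μ := by
    have h := (integrable_const (Real.log 2) (μ := μ)).sub hφint
    have heq : ((fun _ : ℝ => Real.log 2) - fun t => Real.log 2 - f t) = f := by
      funext t; simp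
    rwa [heq] at h
  -- dominated convergence
  set g : ℝ → ℝ := fun t => 2 * Real.log 2 + |f t| with hgdef
  have hgint : Integrable g μ := (integrable_const _).add hfint.abs
  have hbound : ∀ n, ∀ᵐ t ∂μ, ‖fn n t‖ ≤ g t := by
    intro n
    filter_upwards [haeN] with t ht
    have habsne : 0 < (norm : ℂ → ℝ) (1 + c * E t) := by
      rw [norm_pos_iff]
      exact fun h => ht h
    rw [Real.norm_eq_abs, abs_le]
    constructor
    · have hlow : (norm : ℂ → ℝ) (1 + c * E t) / 2 ≤ (norm : ℂ → ℝ) (1 + ((r n : ℝ):ℂ) * c * E t) := by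
        rw [mul_assoc]
        exact key_lower (habsz t) (hr0 n) (le_of_lt (hr1 n))
      have : Real.log ((norm : ℂ → ℝ) (1 + c * E t) / 2) ≤ fn n t :=
        Real.log_le_log (by positivity) hlow
      rw [Real.log_div (ne_of_gt habsne) two_ne_zero] at this
      have habsf : -|f t| ≤ f t := neg_abs_le _
      simp only [hgdef]
      have hl2 : 0 ≤ Real.log 2 := Real.log_nonneg one_le_two
      linarith
    · have h1 : fn n t ≤ Real.log 2 := f_le_log_two (by
        rw [mul_assoc]; exact key_upper (habsz t) (hr0' n) (le_of_lt (hr1 n)))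
      have hl2 : 0 ≤ Real.log 2 := Real.log_nonneg one_le_two
      have h3 : (0:ℝ) ≤ |f t| := abs_nonneg _
      simp only [hgdef]
      linarith
  have hDCT := MeasureTheory.tendsto_integral_of_dominated_convergence g
    (fun n => (hfncont n).aestronglyMeasurable) hgint hbound hlim
  have hzero : (∫ t, f t ∂μ) = 0 := by
    have h2 : Filter.Tendsto (fun n => ∫ t, fn n t ∂μ) Filter.atTop (nhds 0) := by
      simp_rw [hfnzero]
      exact tendsto_const_nhds
    exact tendsto_nhds_unique h2 (by simpa using hDCT) |>.symm
  exact ⟨hfint, hzero⟩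

lemma E_eq_subsingleton (z : ℂ) : ({t : ℝ | E t = z} ∩ Set.Ioc (0:ℝ) 1).Subsingleton := by
  rintro t1 ⟨ht1, ht1'⟩ t2 ⟨ht2, ht2'⟩
  have hE : E t1 = E t2 := by
    rw [Set.mem_setOf_eq] at ht1 ht2
    rw [ht1, ht2]
  rw [E, E, Complex.exp_eq_exp_iff_exists_int] at hE
  obtain ⟨k, hk⟩ := hE
  have hI : (2 * Real.pi * Complex.I) ≠ 0 := by
    simp [Real.pi_ne_zero, Complex.I_ne_zero]
  have : (t1 : ℂ) = (t2 : ℂ) + k := by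
    have h' : 2 * Real.pi * Complex.I * t1 = 2 * Real.pi * Complex.I * (t2 + k) := by
      rw [hk]; ring
    exact mul_left_cancel₀ hI h'
  have hre : t1 = t2 + k := by
    have := congrArg Complex.re this
    simpa using this
  have hk0 : k = 0 := by
    rcases ht1' with ⟨h01, h02⟩
    rcases ht2' with ⟨h03, h04⟩
    have h5 : -1 < (k:ℝ) := by nlinarith
    have h6 : (k:ℝ) < 1 := by nlinarith
    have h5' : (-1:ℤ) < k := by exact_mod_cast h5
    have h6' : k < 1 := by exact_mod_cast h6
    omega
  rw [hre, hk0]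
  simp

lemma bad_null (d : ℂ) :
    (volume.restrict (Set.Ioc (0:ℝ) 1)) {t : ℝ | 1 + d * E t = 0} = 0 := by
  rw [Measure.restrict_apply' measurableSet_Ioc]
  rcases eq_or_ne d 0 with h | h
  · convert measure_empty (μ := volume)
    ext t
    simp [h]
  · have hsub : {t : ℝ | 1 + d * E t = 0} ∩ Set.Ioc (0:ℝ) 1
        ⊆ {t : ℝ | E t = -d⁻¹} ∩ Set.Ioc (0:ℝ) 1 := by
      rintro t ⟨ht, ht'⟩
      refine ⟨?_, ht'⟩
      rw [Set.mem_setOf_eq] at ht ⊢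
      have h1 : d * E t = -1 := by linear_combination ht
      have h2 : E t = d⁻¹ * -1 := by
        rw [← h1, ← mul_assoc, inv_mul_cancel₀ h, one_mul]
      rw [h2]
      ring
    exact measure_mono_null hsub ((E_eq_subsingleton _).measure_zero _)

lemma jensen_le {c : ℂ} (hc : (norm : ℂ → ℝ) c ≤ 1) :
    IntervalIntegrable (fun t => Real.log ((norm : ℂ → ℝ) (1 + c * E t))) volume 0 1 ∧
    (∫ t in (0:ℝ)..1, Real.log ((norm : ℂ → ℝ) (1 + c * E t))) = 0 := by
  rcases eq_or_lt_of_le hc with h | h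
  · have := jensen_boundary h
    refine ⟨?_, ?_⟩
    · rw [intervalIntegrable_iff_integrableOn_Ioc_of_le zero_le_one]
      exact this.1
    · rw [intervalIntegral.integral_of_le zero_le_one]
      exact this.2
  · have hcont : Continuous fun t : ℝ => Real.log ((norm : ℂ → ℝ) (1 + c * E t)) := by
      have h1 : Continuous fun t : ℝ => (norm : ℂ → ℝ) (1 + c * E t) :=
        continuous_norm.comp
          (continuous_const.add (continuous_const.mul continuous_E))
      refine h1.log fun t => ne_of_gt ?_
      rw [norm_pos_iff]
      refine one_add_ne_zero ?_
      rw [norm_mul, abs_E, mul_one]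
      exact h
    exact ⟨hcont.intervalIntegrable _ _, jensen_interior h⟩

lemma jensen_inv {c : ℂ} (hc : (norm : ℂ → ℝ) c ≤ 1) :
    IntervalIntegrable (fun t => Real.log ((norm : ℂ → ℝ) (1 + c * (E t)⁻¹))) volume 0 1 ∧
    (∫ t in (0:ℝ)..1, Real.log ((norm : ℂ → ℝ) (1 + c * (E t)⁻¹))) = 0 := by
  have hcomp : ∀ t : ℝ, Real.log ((norm : ℂ → ℝ) (1 + c * (E t)⁻¹))
      = Real.log ((norm : ℂ → ℝ) (1 + c * E (1 - t))) := by
    intro t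
    congr 3
    rw [E, E]
    push_cast
    rw [mul_sub, Complex.exp_sub]
    rw [mul_one]
    have h2pi : Complex.exp (2 * Real.pi * Complex.I) = 1 := by
      simpa using Complex.exp_int_mul_two_pi_mul_I 1
    rw [h2pi]
    rw [one_div]
  obtain ⟨hint, hval⟩ := jensen_le hc
  constructor
  · have h1 := (IntervalIntegrable.comp_sub_left hint 1).symm
    simp only [sub_zero, sub_self] at h1
    rw [funext hcomp]
    exact h1
  · rw [funext hcomp]
    rw [intervalIntegral.integral_comp_sub_left
      (fun t => Real.log ((norm : ℂ → ℝ) (1 + c * E t))) 1]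
    simpa using hval

lemma abs_ofReal_pos {A : ℝ} (hA0 : 0 < A) : (norm : ℂ → ℝ) ((A:ℝ):ℂ) = A := by
  rw [Complex.norm_real, Real.norm_eq_abs, abs_of_pos hA0]

lemma inner_eval {A : ℝ} (hA : 1 ≤ A) (B : ℂ) :
    (∫ t in (0:ℝ)..1, Real.log ((norm : ℂ → ℝ) ((A:ℂ) + B * E t)))
      = max (Real.log A) (Real.log ((norm : ℂ → ℝ) B)) := by
  have hA0 : (0:ℝ) < A := lt_of_lt_of_le one_pos hA
  have hA0' : ((A:ℝ):ℂ) ≠ 0 := by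
    simp only [ne_eq, Complex.ofReal_eq_zero]
    exact ne_of_gt hA0
  rcases eq_or_ne B 0 with hB | hB
  · subst hB
    simp only [zero_mul, add_zero]
    rw [intervalIntegral.integral_const, abs_ofReal_pos hA0]
    rw [norm_zero, Real.log_zero]
    rw [max_eq_left (Real.log_nonneg hA)]
    simp
  · rcases le_total ((norm : ℂ → ℝ) B) A with hle | hge
    · set d : ℂ := B / (A:ℂ) with hd
      have habsd : (norm : ℂ → ℝ) d ≤ 1 := by
        rw [hd, norm_div, abs_ofReal_pos hA0, div_le_one hA0]
        exact hle
      have hbad : volume ({t : ℝ | 1 + d * E t = 0} ∩ Set.Ioc (0:ℝ) 1) = 0 := by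
        have := bad_null d
        rwa [Measure.restrict_apply' measurableSet_Ioc] at this
      have hae : ∀ᵐ t : ℝ, t ∈ Set.uIoc (0:ℝ) 1 →
          Real.log ((norm : ℂ → ℝ) ((A:ℂ) + B * E t))
            = Real.log A + Real.log ((norm : ℂ → ℝ) (1 + d * E t)) := by
        rw [MeasureTheory.ae_iff]
        refine measure_mono_null ?_ hbad
        intro t ht
        simp only [Set.mem_setOf_eq, not_forall] at ht
        obtain ⟨h1, h2⟩ := ht
        have h1' : t ∈ Set.Ioc (0:ℝ) 1 := by
          rwa [Set.uIoc_of_le zero_le_one] at h1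
        refine ⟨?_, h1'⟩
        by_contra hne
        apply h2
        have hfac : (A:ℂ) + B * E t = (A:ℂ) * (1 + d * E t) := by
          rw [hd]; field_simp
        rw [hfac, norm_mul, abs_ofReal_pos hA0,
          Real.log_mul (ne_of_gt hA0) (by rwa [norm_ne_zero_iff])]
      rw [intervalIntegral.integral_congr_ae hae]
      obtain ⟨hint, hval⟩ := jensen_le habsd
      rw [intervalIntegral.integral_add (intervalIntegrable_const) hint, hval, add_zero]
      rw [intervalIntegral.integral_const]
      rw [max_eq_left]
      · simp
      · rcases eq_or_lt_of_le (norm_nonneg B) with h | h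
        · rw [← h, Real.log_zero]
          exact Real.log_nonneg hA
        · exact Real.log_le_log h hle
    · have hBne : (norm : ℂ → ℝ) B ≠ 0 := by
        rwa [norm_ne_zero_iff]
      have hB0 : 0 < (norm : ℂ → ℝ) B := lt_of_lt_of_le hA0 hge
      set d : ℂ := (A:ℂ) / B with hd
      have habsd : (norm : ℂ → ℝ) d ≤ 1 := by
        rw [hd, norm_div, abs_ofReal_pos hA0, div_le_one hB0]
        exact hge
      have hbad : volume ({t : ℝ | 1 + d * (E t)⁻¹ = 0} ∩ Set.Ioc (0:ℝ) 1) = 0 := by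
        refine measure_mono_null ?_ ((E_eq_subsingleton (-d)).measure_zero _)
        rintro t ⟨ht, ht'⟩
        refine ⟨?_, ht'⟩
        rw [Set.mem_setOf_eq] at ht ⊢
        have hEne : E t ≠ 0 := Complex.exp_ne_zero _
        have := congrArg (fun z => z * E t) ht
        simp only [add_mul, one_mul, zero_mul, mul_assoc, inv_mul_cancel₀ hEne,
          mul_one] at this
        linear_combination this
      have hae : ∀ᵐ t : ℝ, t ∈ Set.uIoc (0:ℝ) 1 →
          Real.log ((norm : ℂ → ℝ) ((A:ℂ) + B * E t))
            = Real.log ((norm : ℂ → ℝ) B) + Real.log ((norm : ℂ → ℝ) (1 + d * (E t)⁻¹)) := by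
        rw [MeasureTheory.ae_iff]
        refine measure_mono_null ?_ hbad
        intro t ht
        simp only [Set.mem_setOf_eq, not_forall] at ht
        obtain ⟨h1, h2⟩ := ht
        have h1' : t ∈ Set.Ioc (0:ℝ) 1 := by
          rwa [Set.uIoc_of_le zero_le_one] at h1
        refine ⟨?_, h1'⟩
        by_contra hne
        apply h2
        have hEne : E t ≠ 0 := Complex.exp_ne_zero _
        have hfac : (A:ℂ) + B * E t = (B * E t) * (1 + d * (E t)⁻¹) := by
          rw [hd]; field_simp; ring
        rw [hfac, norm_mul, norm_mul, abs_E, mul_one,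
          Real.log_mul hBne (by rwa [norm_ne_zero_iff])]
      rw [intervalIntegral.integral_congr_ae hae]
      obtain ⟨hint, hval⟩ := jensen_inv habsd
      rw [intervalIntegral.integral_add (intervalIntegrable_const) hint, hval, add_zero]
      rw [intervalIntegral.integral_const]
      rw [max_eq_right (Real.log_le_log hA0 hge)]
      simp

lemma E_re (s : ℝ) : (E s).re = Real.cos (2*Real.pi*s) := by
  have h : E s = Complex.exp (((2*Real.pi*s : ℝ):ℂ) * Complex.I) := by
    rw [E]; push_cast; ring_nf
  rw [h, Complex.exp_ofReal_mul_I_re]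

lemma E_im (s : ℝ) : (E s).im = Real.sin (2*Real.pi*s) := by
  have h : E s = Complex.exp (((2*Real.pi*s : ℝ):ℂ) * Complex.I) := by
    rw [E]; push_cast; ring_nf
  rw [h, Complex.exp_ofReal_mul_I_im]

lemma absB (w s : ℝ) : (norm : ℂ → ℝ) ((E s + (w:ℂ))^2) = 1 + 2*w*Real.cos (2*Real.pi*s) + w^2 := by
  rw [norm_pow, Complex.sq_norm, Complex.normSq_apply]
  simp only [Complex.add_re, Complex.add_im, Complex.ofReal_re, Complex.ofReal_im,
    E_re, E_im, add_zero]
  nlinarith [Real.sin_sq_add_cos_sq (2*Real.pi*s)]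

lemma Btilde_nonneg (w s : ℝ) : 0 ≤ 1 + 2*w*Real.cos (2*Real.pi*s) + w^2 := by
  rw [← absB w s]
  exact norm_nonneg _

lemma max_log {A B : ℝ} (hA : 1 ≤ A) (hB : 0 ≤ B) :
    max (Real.log A) (Real.log B) = Real.log (max A B) := by
  have hA0 : (0:ℝ) < A := lt_of_lt_of_le one_pos hA
  rcases le_total A B with h | h
  · rw [max_eq_right h, max_eq_right (Real.log_le_log hA0 h)]
  · rw [max_eq_left h]
    rcases eq_or_lt_of_le hB with h0 | h0
    · rw [← h0, Real.log_zero, max_eq_left (Real.log_nonneg hA)]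
    · rw [max_eq_left (Real.log_le_log h0 h)]

lemma outer_eval (w : ℝ) (hw : 0 ≤ w) :
    (∫ s in (0:ℝ)..1, Real.log (max (1+w^2) (1 + 2*w*Real.cos (2*Real.pi*s) + w^2)))
    = (1/2) * Real.log (1+w^2)
      + 2 * ∫ s in (0:ℝ)..(1/4), Real.log (1 + 2*w*Real.cos (2*Real.pi*s) + w^2) := by
  set G : ℝ → ℝ := fun s => Real.log (max (1+w^2) (1 + 2*w*Real.cos (2*Real.pi*s) + w^2))
    with hG
  have hA1 : (1:ℝ) ≤ 1 + w^2 := by nlinarith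
  have hGcont : Continuous G := by
    have hmax : Continuous fun s : ℝ => max (1+w^2) (1 + 2*w*Real.cos (2*Real.pi*s) + w^2) := by
      refine continuous_const.max ?_
      have : Continuous fun s : ℝ => Real.cos (2*Real.pi*s) :=
        Real.continuous_cos.comp (continuous_const.mul continuous_id)
      continuity
    refine hmax.log fun s => ?_
    have : (1:ℝ) ≤ max (1+w^2) (1 + 2*w*Real.cos (2*Real.pi*s) + w^2) :=
      le_trans hA1 (le_max_left _ _)
    linarith
  have hii : ∀ a b : ℝ, IntervalIntegrable G volume a b := fun a b =>
    hGcont.intervalIntegrable a b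
  have hsplit1 : (∫ s in (0:ℝ)..(3/4), G s)
      = (∫ s in (0:ℝ)..(1/4), G s) + ∫ s in (1/4:ℝ)..(3/4), G s :=
    (intervalIntegral.integral_add_adjacent_intervals (hii 0 (1/4)) (hii (1/4) (3/4))).symm
  have hsplit2 : (∫ s in (0:ℝ)..1, G s)
      = (∫ s in (0:ℝ)..(3/4), G s) + ∫ s in (3/4:ℝ)..1, G s :=
    (intervalIntegral.integral_add_adjacent_intervals (hii 0 (3/4)) (hii (3/4) 1)).symm
  -- middle segment
  have hmid : (∫ s in (1/4:ℝ)..(3/4), G s) = (1/2) * Real.log (1+w^2) := by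
    have heq : Set.EqOn G (fun _ => Real.log (1+w^2)) (Set.uIcc (1/4:ℝ) (3/4)) := by
      intro s hs
      rw [Set.uIcc_of_le (by norm_num : (1/4:ℝ) ≤ 3/4)] at hs
      obtain ⟨hs1, hs2⟩ := hs
      have hpi : (0:ℝ) < Real.pi := Real.pi_pos
      have hcos : Real.cos (2*Real.pi*s) ≤ 0 := by
        apply Real.cos_nonpos_of_pi_div_two_le_of_le
        · nlinarith
        · nlinarith
      have hle : 1 + 2*w*Real.cos (2*Real.pi*s) + w^2 ≤ 1 + w^2 := by nlinarith
      simp only [hG]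
      rw [max_eq_left hle]
    rw [intervalIntegral.integral_congr heq, intervalIntegral.integral_const]
    norm_num
  -- third segment equals first
  have hthird : (∫ s in (3/4:ℝ)..1, G s) = ∫ s in (0:ℝ)..(1/4), G s := by
    have hs : (∫ x in (0:ℝ)..(1/4), G (1 - x)) = ∫ x in (3/4:ℝ)..1, G x := by
      have := intervalIntegral.integral_comp_sub_left (a := (0:ℝ)) (b := (1/4:ℝ)) G 1
      norm_num at this
      convert this using 2 <;> norm_num
    rw [← hs]
    refine intervalIntegral.integral_congr fun x hx => ?_
    simp only [hG]
    congr 2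
    have : 2*Real.pi*(1-x) = 2*Real.pi - 2*Real.pi*x := by ring
    rw [this, Real.cos_two_pi_sub]
  -- first segment
  have hfirst : (∫ s in (0:ℝ)..(1/4), G s)
      = ∫ s in (0:ℝ)..(1/4), Real.log (1 + 2*w*Real.cos (2*Real.pi*s) + w^2) := by
    refine intervalIntegral.integral_congr fun s hs => ?_
    rw [Set.uIcc_of_le (by norm_num : (0:ℝ) ≤ 1/4)] at hs
    obtain ⟨hs1, hs2⟩ := hs
    have hpi : (0:ℝ) < Real.pi := Real.pi_pos
    have hcos : 0 ≤ Real.cos (2*Real.pi*s) := by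
      apply Real.cos_nonneg_of_mem_Icc
      constructor <;> nlinarith
    have hge : 1 + w^2 ≤ 1 + 2*w*Real.cos (2*Real.pi*s) + w^2 := by nlinarith
    simp only [hG]
    rw [max_eq_right hge]
  rw [hsplit2, hsplit1, hmid, hthird, hfirst]
  ring

lemma subst_quarter (w : ℝ) :
    (∫ s in (0:ℝ)..(1/4), Real.log (1 + 2*w*Real.cos (2*Real.pi*s) + w^2))
    = (2*Real.pi)⁻¹ * ∫ θ in (0:ℝ)..(Real.pi/2), Real.log (1 + 2*w*Real.cos θ + w^2) := by
  have hc : (2*Real.pi) ≠ 0 := by positivity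
  have := intervalIntegral.integral_comp_mul_left
    (f := fun θ => Real.log (1 + 2*w*Real.cos θ + w^2)) (a := (0:ℝ)) (b := (1/4:ℝ)) hc
  simp only [mul_zero] at this
  rw [this]
  have h2 : 2*Real.pi*(1/4) = Real.pi/2 := by ring
  rw [h2, smul_eq_mul]

-- FTC in v : ∫₀ʷ (cos θ + v)/(1+2v cos θ+v²) dv = ½ log (1+2w cos θ+w²)
lemma ftc_v {θ : ℝ} (hθ : 0 ≤ Real.cos θ) {w : ℝ} (hw : 0 ≤ w) :
    (∫ v in (0:ℝ)..w, (Real.cos θ + v)/(1 + 2*v*Real.cos θ + v^2))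
      = (1/2) * Real.log (1 + 2*w*Real.cos θ + w^2) := by
  set c := Real.cos θ with hcdef
  have hden : ∀ v : ℝ, v ∈ Set.uIcc (0:ℝ) w → (1:ℝ) ≤ 1 + 2*v*c + v^2 := by
    intro v hv
    rw [Set.uIcc_of_le hw] at hv
    obtain ⟨h1, h2⟩ := hv
    nlinarith
  have hderiv : ∀ v ∈ Set.uIcc (0:ℝ) w,
      HasDerivAt (fun v : ℝ => (1/2) * Real.log (1 + 2*v*c + v^2))
        ((c + v)/(1 + 2*v*c + v^2)) v := by
    intro v hv
    have hpos : (0:ℝ) < 1 + 2*v*c + v^2 := lt_of_lt_of_le one_pos (hden v hv)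
    have h1 : HasDerivAt (fun v : ℝ => 1 + 2*v*c + v^2) (2*c + 2*v) v := by
      have := ((hasDerivAt_id v).const_mul (2*c)).add_const (1:ℝ)
      have h2 := (hasDerivAt_pow 2 v)
      have h3 := (((hasDerivAt_id v).const_mul (2*c)).add h2).add_const (1:ℝ)
      refine (h3.congr_deriv (by norm_num)).congr_of_eventuallyEq (Filter.Eventually.of_forall fun x => ?_)
      simp only [id_eq, Pi.add_apply]; ring
    have h2 := (Real.hasDerivAt_log (ne_of_gt hpos)).comp v h1
    have h3 := h2.const_mul (1/2:ℝ)
    refine h3.congr_deriv ?_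
    symm
    field_simp
  have hcontig : ContinuousOn (fun v : ℝ => (c + v)/(1 + 2*v*c + v^2)) (Set.uIcc 0 w) := by
    apply ContinuousOn.div
    · fun_prop
    · fun_prop
    · intro v hv
      have := hden v hv
      linarith
  rw [intervalIntegral.integral_eq_sub_of_hasDerivAt hderiv
    (hcontig.intervalIntegrable)]
  simp

lemma ftc_theta {v : ℝ} (hv : 0 < v) :
    (∫ θ in (0:ℝ)..(Real.pi/2), (Real.cos θ + v)/(1 + 2*v*Real.cos θ + v^2))
      = Real.arctan v / v := by
  have hpi : (0:ℝ) < Real.pi := Real.pi_pos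
  have hmem : ∀ θ : ℝ, θ ∈ Set.uIcc (0:ℝ) (Real.pi/2) → 0 ≤ Real.cos θ := by
    intro θ hθ
    rw [Set.uIcc_of_le (by positivity)] at hθ
    obtain ⟨h1, h2⟩ := hθ
    apply Real.cos_nonneg_of_mem_Icc
    constructor <;> linarith
  have hb : ∀ θ : ℝ, θ ∈ Set.uIcc (0:ℝ) (Real.pi/2) → (0:ℝ) < 1 + v * Real.cos θ := by
    intro θ hθ
    have := hmem θ hθ
    nlinarith
  have hden : ∀ θ : ℝ, θ ∈ Set.uIcc (0:ℝ) (Real.pi/2) →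
      (0:ℝ) < 1 + 2*v*Real.cos θ + v^2 := by
    intro θ hθ
    have := hmem θ hθ
    nlinarith
  have hderiv : ∀ θ ∈ Set.uIcc (0:ℝ) (Real.pi/2),
      HasDerivAt (fun θ : ℝ => (1/v) * Real.arctan (v * Real.sin θ / (1 + v * Real.cos θ)))
        ((Real.cos θ + v)/(1 + 2*v*Real.cos θ + v^2)) θ := by
    intro θ hθ
    have hbθ : (0:ℝ) < 1 + v * Real.cos θ := hb θ hθ
    have hnum : HasDerivAt (fun θ : ℝ => v * Real.sin θ) (v * Real.cos θ) θ :=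
      (Real.hasDerivAt_sin θ).const_mul v
    have hdenom : HasDerivAt (fun θ : ℝ => 1 + v * Real.cos θ) (v * -Real.sin θ) θ := by
      have := ((Real.hasDerivAt_cos θ).const_mul v).const_add (1:ℝ)
      convert this using 1
    have hquot := hnum.div hdenom (ne_of_gt hbθ)
    set u : ℝ := v * Real.sin θ / (1 + v * Real.cos θ) with hu
    have harc := (Real.hasDerivAt_arctan u).comp θ hquot
    have hfinal := harc.const_mul (1/v)
    refine hfinal.congr_deriv ?_
    symm
    have hsc := Real.sin_sq_add_cos_sq θ
    have h1pu : (0:ℝ) < 1 + u^2 := by positivity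
    have hd2 : (1 + 2*v*Real.cos θ + v^2) ≠ 0 := ne_of_gt (hden θ hθ)
    have hsin2 : Real.sin θ ^ 2 = 1 - Real.cos θ ^ 2 := by nlinarith
    rw [hu]
    field_simp
    have ha : (1 + Real.cos θ * v) ≠ 0 := by rw [mul_comm]; exact ne_of_gt hbθ
    have hd4 : 1 + Real.cos θ * v * 2 + v ^ 2 ≠ 0 := by
      rw [show 1 + Real.cos θ * v * 2 + v ^ 2 = 1 + 2*v*Real.cos θ + v^2 by ring]; exact hd2
    rw [hsin2, one_add_div (pow_ne_zero 2 ha), mul_div_assoc', div_div,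
      div_eq_div_iff (mul_ne_zero (pow_ne_zero 2 ha) hd4) (pow_ne_zero 2 ha)]
    ring
  have hcont : ContinuousOn (fun θ : ℝ => (Real.cos θ + v)/(1 + 2*v*Real.cos θ + v^2))
      (Set.uIcc (0:ℝ) (Real.pi/2)) := by
    apply ContinuousOn.div
    · fun_prop
    · fun_prop
    · intro θ hθ
      exact ne_of_gt (hden θ hθ)
  rw [intervalIntegral.integral_eq_sub_of_hasDerivAt hderiv hcont.intervalIntegrable]
  rw [Real.sin_pi_div_two, Real.cos_pi_div_two, Real.sin_zero, Real.cos_zero]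
  simp [Real.arctan_zero]
  field_simp

lemma swap_integrals (w : ℝ) (hw : 0 ≤ w) :
    (∫ v in (0:ℝ)..w, ∫ θ in (0:ℝ)..(Real.pi/2), (Real.cos θ + v)/(1 + 2*v*Real.cos θ + v^2))
    = ∫ θ in (0:ℝ)..(Real.pi/2), ∫ v in (0:ℝ)..w,
        (Real.cos θ + v)/(1 + 2*v*Real.cos θ + v^2) := by
  have hpi : (0:ℝ) ≤ Real.pi/2 := by positivity
  have hint : Integrable (Function.uncurry
      (fun v θ : ℝ => (Real.cos θ + v)/(1 + 2*v*Real.cos θ + v^2)))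
      ((volume.restrict (Set.Ioc (0:ℝ) w)).prod (volume.restrict (Set.Ioc (0:ℝ) (Real.pi/2)))) := by
    rw [Measure.prod_restrict, ← Measure.volume_eq_prod]
    have hsub : Set.Ioc (0:ℝ) w ×ˢ Set.Ioc (0:ℝ) (Real.pi/2)
        ⊆ Set.Icc (0:ℝ) w ×ˢ Set.Icc (0:ℝ) (Real.pi/2) :=
      Set.prod_mono Set.Ioc_subset_Icc_self Set.Ioc_subset_Icc_self
    refine IntegrableOn.mono_set ?_ hsub
    refine ContinuousOn.integrableOn_compact (isCompact_Icc.prod isCompact_Icc) ?_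
    apply ContinuousOn.div
    · fun_prop
    · fun_prop
    · rintro ⟨v, θ⟩ ⟨⟨hv1, _⟩, ⟨hθ1, hθ2⟩⟩
      have hcos : 0 ≤ Real.cos θ := by
        apply Real.cos_nonneg_of_mem_Icc
        constructor <;> linarith [Real.pi_pos]
      simp only [Function.uncurry]
      nlinarith
  rw [intervalIntegral.integral_of_le hw, intervalIntegral.integral_of_le hpi]
  simp_rw [intervalIntegral.integral_of_le hpi, intervalIntegral.integral_of_le hw]
  exact MeasureTheory.integral_integral_swap hint

theorem arctan_integral_eq_mahler (w : ℝ) (hw : 0 ≤ w) :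
    (∫ u in (0:ℝ)..w, Real.arctan u / u) =
      (Real.pi / 2) *
        (∫ s in (0:ℝ)..1, ∫ t in (0:ℝ)..1,
          Real.log ‖((1 + w ^ 2 : ℝ) +
            (Complex.exp (2 * Real.pi * Complex.I * s) + (w : ℂ)) ^ 2 *
              Complex.exp (2 * Real.pi * Complex.I * t) : ℂ)‖)
      - (Real.pi / 4) * Real.log (1 + w ^ 2) := by
  have hA1 : (1:ℝ) ≤ 1 + w^2 := by nlinarith
  have hinner : ∀ s : ℝ,
      (∫ t in (0:ℝ)..1, Real.log ((norm : ℂ → ℝ) (((1 + w ^ 2 : ℝ):ℂ) + (E s + (w:ℂ)) ^ 2 * E t)))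
      = Real.log (max (1+w^2) (1 + 2*w*Real.cos (2*Real.pi*s) + w^2)) := by
    intro s
    rw [inner_eval hA1 ((E s + (w:ℂ))^2), absB, max_log hA1 (Btilde_nonneg w s)]
  have houter : (∫ s in (0:ℝ)..1, ∫ t in (0:ℝ)..1,
      Real.log ((norm : ℂ → ℝ) (((1 + w ^ 2 : ℝ):ℂ) + (E s + (w:ℂ)) ^ 2 * E t)))
      = (1/2) * Real.log (1+w^2)
        + Real.pi⁻¹ * ∫ θ in (0:ℝ)..(Real.pi/2), Real.log (1 + 2*w*Real.cos θ + w^2) := by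
    rw [intervalIntegral.integral_congr (fun s _ => hinner s), outer_eval w hw, subst_quarter w]
    have hπ : Real.pi ≠ 0 := Real.pi_ne_zero
    field_simp
  have hlhs : (∫ u in (0:ℝ)..w, Real.arctan u / u)
      = (1/2) * ∫ θ in (0:ℝ)..(Real.pi/2), Real.log (1 + 2*w*Real.cos θ + w^2) := by
    rw [intervalIntegral.integral_of_le hw]
    have h1 : (∫ u in Set.Ioc (0:ℝ) w, Real.arctan u / u)
        = ∫ v in Set.Ioc (0:ℝ) w, ∫ θ in (0:ℝ)..(Real.pi/2),
            (Real.cos θ + v)/(1 + 2*v*Real.cos θ + v^2) := by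
      refine setIntegral_congr_fun measurableSet_Ioc fun v hv => ?_
      exact (ftc_theta hv.1).symm
    rw [h1, ← intervalIntegral.integral_of_le hw, swap_integrals w hw]
    have h2 : ∀ θ ∈ Set.uIcc (0:ℝ) (Real.pi/2),
        (∫ v in (0:ℝ)..w, (Real.cos θ + v)/(1 + 2*v*Real.cos θ + v^2))
        = (1/2) * Real.log (1 + 2*w*Real.cos θ + w^2) := by
      intro θ hθ
      rw [Set.uIcc_of_le (by positivity)] at hθ
      refine ftc_v ?_ hw
      apply Real.cos_nonneg_of_mem_Icc
      constructor
      · linarith [hθ.1, Real.pi_pos]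
      · exact hθ.2
    rw [intervalIntegral.integral_congr h2, intervalIntegral.integral_const_mul]
  have hET : ∀ x : ℝ, Complex.exp (2 * Real.pi * Complex.I * x) = E x := fun x => rfl
  simp only [hET]
  rw [hlhs, houter]
  have hπ : Real.pi ≠ 0 := Real.pi_ne_zero
  field_simp
  ring
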